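/- Let p be an odd prime. All minors of the (p−1)/2 × (p−1)/2 matrix with (j,m)-entry (ω^j + ω^{−j})^m, where ω = exp(2πi/p) and j, m range over 1,...,(p−1)/2, are nonzero. -/

import Mathlib

open Complex

open Polynomial in
/-- A polynomial vanishing at all elements of a finite set (in a domain) is
divisible by the product of the corresponding linear factors. -/
theorem aux_prod_X_sub_C_dvd {R : Type*} [CommRing R] [IsDomain R] (s : Finset R) :
    ∀ P : R[X], (∀ x ∈ s, P.eval x = 0) → (∏ x ∈ s, (X - C x)) ∣ P := by
  classical
  induction s using Finset.induction_on with
  | empty => intro P _; simp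
  | @insert a s ha ih =>
    intro P hP
    obtain ⟨Q, hQ⟩ := (Polynomial.dvd_iff_isRoot (p := P) (a := a)).mpr
      (hP a (Finset.mem_insert_self a s))
    have hQroot : ∀ x ∈ s, Q.eval x = 0 := by
      intro x hx
      have h0 := hP x (Finset.mem_insert_of_mem hx)
      rw [hQ] at h0
      simp only [eval_mul, eval_sub, eval_X, eval_C] at h0
      rcases mul_eq_zero.mp h0 with h | h
      · exact absurd (sub_eq_zero.mp h) (fun hxa => ha (hxa ▸ hx))
      · exact h
    obtain ⟨T, hT⟩ := ih Q hQroot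
    refine ⟨T, ?_⟩
    rw [Finset.prod_insert ha, hQ, hT, mul_assoc]

set_option maxHeartbeats 2000000
set_option synthInstance.maxHeartbeats 400000

/-- Real version of Chebotarëv's theorem: all minors of the
`(p-1)/2 × (p-1)/2` Vandermonde matrix with entries `(ω^j + ω^{-j})^m`,
`j, m = 1, ..., (p-1)/2`, are nonzero. -/
theorem real_chebotarev_minors_nonzero
    (p : ℕ) (hp : p.Prime) (hodd : Odd p)
    (ω : ℂ) (hω : ω = Complex.exp (2 * Real.pi * Complex.I / p))
    (k : ℕ) (r c : Fin k → Fin ((p - 1) / 2))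
    (hr : Function.Injective r) (hc : Function.Injective c) :
    Matrix.det (fun i j : Fin k =>
        (ω ^ ((r i : ℕ) + 1) + ω⁻¹ ^ ((r i : ℕ) + 1)) ^ ((c j : ℕ) + 1)) ≠ 0 := by
  classical
  haveI : Fact p.Prime := ⟨hp⟩
  haveI : NeZero p := ⟨hp.ne_zero⟩
  have hp2 : p ≠ 2 := by rintro rfl; revert hodd; decide
  have hp3 : 3 ≤ p := by have := hp.two_le; omega
  have h2n : 2 * ((p - 1) / 2) + 1 = p := by obtain ⟨t, ht⟩ := hodd; omega
  -- basic facts about ω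
  have hprim : IsPrimitiveRoot ω p := by
    rw [hω]; exact Complex.isPrimitiveRoot_exp p (by omega)
  have hω0 : ω ≠ 0 := hprim.ne_zero (by omega)
  have hω1 : ω ≠ 1 := hprim.ne_one (by omega)
  have hωp : ω ^ p = 1 := hprim.pow_eq_one
  -- the exponents
  set a : Fin k → ℕ := fun i => (r i : ℕ) + 1 with ha
  set m : Fin k → ℕ := fun j => (c j : ℕ) + 1 with hm
  have han : ∀ i, 1 ≤ a i ∧ a i ≤ (p-1)/2 := fun i => ⟨le_add_self, (r i).isLt⟩
  have hmn : ∀ j, 1 ≤ m j ∧ m j ≤ (p-1)/2 := fun j => ⟨le_add_self, (c j).isLt⟩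
  have hainj : Function.Injective a := by
    intro i j h
    simp only [ha] at h
    exact hr (Fin.ext (by omega))
  have hminj : Function.Injective m := by
    intro i j h
    simp only [hm] at h
    exact hc (Fin.ext (by omega))
  -- the nodes are (real) cosines
  have hωe : ∀ e : ℕ, ω ^ e = Complex.exp (((2 * Real.pi * e / p : ℝ) : ℂ) * Complex.I) := by
    intro e
    rw [hω, ← Complex.exp_nat_mul]
    congr 1
    push_cast
    ring
  have hx2 : ∀ e : ℕ,
      ω ^ e + ω⁻¹ ^ e = ((2 * Real.cos (2 * Real.pi * e / p) : ℝ) : ℂ) := by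
    intro e
    rw [inv_pow, hωe e, ← Complex.exp_neg, ← neg_mul, Complex.exp_mul_I, Complex.exp_mul_I]
    push_cast [Complex.ofReal_cos]
    simp only [Complex.cos_neg, Complex.sin_neg]
    ring
  -- injectivity of the nodes
  have hmem : ∀ i : Fin k, (2 * Real.pi * (a i) / p) ∈ Set.Icc 0 Real.pi := by
    intro i
    have h3 : 2 * a i ≤ p := by have := (han i).2; omega
    have h2 : 2 * (a i : ℝ) ≤ (p : ℝ) := by exact_mod_cast h3
    constructor
    · positivity
    · rw [div_le_iff₀ (by positivity)]
      nlinarith [Real.pi_pos]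
  have hxinj : ∀ i j : Fin k,
      ω ^ a i + ω⁻¹ ^ a i = ω ^ a j + ω⁻¹ ^ a j → i = j := by
    intro i j h
    rw [hx2 (a i), hx2 (a j)] at h
    have h' := Complex.ofReal_injective h
    have hcos : Real.cos (2 * Real.pi * (a i) / p) = Real.cos (2 * Real.pi * (a j) / p) := by
      linarith
    have heq := Real.injOn_cos (hmem i) (hmem j) hcos
    have haij : (a i : ℝ) = (a j : ℝ) := by
      have hc2 : (2 * Real.pi / p) ≠ 0 :=
        ne_of_gt (div_pos (by positivity) (by exact_mod_cast hp.pos))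
      apply mul_left_cancel₀ hc2
      calc 2 * Real.pi / p * (a i) = 2 * Real.pi * (a i) / p := by ring
        _ = 2 * Real.pi * (a j) / p := heq
        _ = 2 * Real.pi / p * (a j) := by ring
    exact hainj (by exact_mod_cast haij)
  -- the subring ℤ[ω] of ℂ
  set Aev : Polynomial ℤ →+* ℂ := (Polynomial.aeval ω : Polynomial ℤ →ₐ[ℤ] ℂ).toRingHom
    with hAev
  set O : Subring ℂ := Aev.range with hO
  haveI hNoeth : IsNoetherianRing O :=
    isNoetherianRing_of_surjective (Polynomial ℤ) O Aev.rangeRestrict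
      Aev.rangeRestrict_surjective
  -- the reduction map to ZMod p
  set φ : Polynomial ℤ →+* ZMod p :=
    (Int.castRingHom (ZMod p)).comp (Polynomial.evalRingHom 1) with hφdef
  have hφ : ∀ f : Polynomial ℤ, φ f = ((Polynomial.eval 1 f : ℤ) : ZMod p) := fun f => rfl
  have hker : ∀ f : Polynomial ℤ, Aev f = 0 → φ f = 0 := by
    intro f hf
    have hint : IsIntegral ℤ ω := hprim.isIntegral (by omega)
    have hdvd : minpoly ℤ ω ∣ f := minpoly.isIntegrallyClosed_dvd hint hf
    rw [← Polynomial.cyclotomic_eq_minpoly hprim (by omega)] at hdvd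
    obtain ⟨g, rfl⟩ := hdvd
    rw [hφ, Polynomial.eval_mul, Polynomial.eval_one_cyclotomic_prime]
    push_cast
    simp
  have hmemO : ∀ z : O, ∃ f : Polynomial ℤ, Aev f = (z : ℂ) := fun z => z.2
  set rep : O → Polynomial ℤ := fun z => (hmemO z).choose with hrepdef
  have hrep : ∀ z : O, Aev (rep z) = (z : ℂ) := fun z => (hmemO z).choose_spec
  have hcong : ∀ f g : Polynomial ℤ, Aev f = Aev g → φ f = φ g := by
    intro f g h
    have h0 : φ (f - g) = 0 := hker _ (by rw [map_sub, h, sub_self])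
    rw [map_sub] at h0
    exact sub_eq_zero.mp h0
  set ψ : O →+* ZMod p :=
    { toFun := fun z => φ (rep z)
      map_one' := by
        refine (hcong _ 1 ?_).trans (map_one φ)
        rw [hrep]; simp
      map_mul' := by
        intro z w
        refine (hcong _ (rep z * rep w) ?_).trans (map_mul φ _ _)
        rw [map_mul, hrep, hrep, hrep]; push_cast; ring
      map_zero' := by
        refine (hcong _ 0 ?_).trans (map_zero φ)
        rw [hrep]; simp
      map_add' := by
        intro z w
        refine (hcong _ (rep z + rep w) ?_).trans (map_add φ _ _)
        rw [map_add, hrep, hrep, hrep]; push_cast; ring } with hψdef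
  have hψ : ∀ (z : O) (f : Polynomial ℤ), Aev f = (z : ℂ) → ψ z = φ f := by
    intro z f h
    exact hcong _ _ (by rw [hrep z, h])
  -- ω as an element of O
  have hωmem : ω ∈ O := ⟨Polynomial.X, by simp [hAev]⟩
  set ωO : O := ⟨ω, hωmem⟩ with hωO
  have hψω : ψ ωO = 1 := by
    rw [hψ ωO Polynomial.X (by simp [hAev]; rfl)]
    rw [hφ]; simp
  -- the nodes as elements of O
  set fpoly : Fin k → Polynomial ℤ :=
    fun i => Polynomial.X ^ (a i) + Polynomial.X ^ ((p - 1) * a i) with hfpoly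
  have hinv : ω⁻¹ = ω ^ (p - 1) := by
    refine (inv_eq_of_mul_eq_one_right ?_)
    rw [← pow_succ']
    have h1 : p - 1 + 1 = p := by omega
    rw [h1, hωp]
  have hxval : ∀ i : Fin k, Aev (fpoly i) = ω ^ (a i) + ω⁻¹ ^ (a i) := by
    intro i
    simp only [hfpoly, hAev, map_add, map_pow, AlgHom.toRingHom_eq_coe, RingHom.coe_coe,
      Polynomial.aeval_X]
    rw [hinv, ← pow_mul, mul_comm (p-1) (a i), pow_mul]
  set xO : Fin k → O := fun i => ⟨ω ^ (a i) + ω⁻¹ ^ (a i), ⟨fpoly i, hxval i⟩⟩ with hxO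
  have hψx : ∀ i, ψ (xO i) = 2 := by
    intro i
    rw [hψ (xO i) (fpoly i) (hxval i)]
    rw [hφ]
    simp [hfpoly]
  have hxOinj : Function.Injective xO := by
    intro i j h
    exact hxinj i j (congrArg Subtype.val h)
  -- the cyclotomic polynomial vanishes under Aev
  have hΦ0 : Aev (Polynomial.cyclotomic p ℤ) = 0 := by
    have h1 : Aev (Polynomial.cyclotomic p ℤ)
        = Polynomial.eval ω (Polynomial.cyclotomic p ℂ) := by
      rw [← Polynomial.map_cyclotomic_int p ℂ, Polynomial.eval_map]
      rfl
    rw [h1]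
    exact hprim.isRoot_cyclotomic (by omega)
  -- kernel of ψ is divisibility by ωO - 1
  have hkerψ : ∀ z : O, ψ z = 0 → (ωO - 1) ∣ z := by
    intro z hz
    have h1 : ((Polynomial.eval 1 (rep z) : ℤ) : ZMod p) = 0 := hz
    obtain ⟨t, ht⟩ := (ZMod.intCast_zmod_eq_zero_iff_dvd _ p).mp h1
    obtain ⟨g, hg⟩ := Polynomial.X_sub_C_dvd_sub_C_eval (a := (1 : ℤ)) (p := rep z)
    obtain ⟨h, hh⟩ := Polynomial.X_sub_C_dvd_sub_C_eval (a := (1 : ℤ))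
      (p := Polynomial.cyclotomic p ℤ)
    rw [Polynomial.eval_one_cyclotomic_prime] at hh
    have hCt : Polynomial.C (Polynomial.eval 1 (rep z))
        = Polynomial.C ((p : ℤ)) * Polynomial.C t := by rw [ht, map_mul]
    have hf2 : rep z = (Polynomial.X - Polynomial.C 1) * (g - h * Polynomial.C t)
        + Polynomial.cyclotomic p ℤ * Polynomial.C t := by
      linear_combination hg + hCt - Polynomial.C t * hh
    have hval : (z : ℂ) = (ω - 1) * Aev (g - h * Polynomial.C t) := by
      rw [← hrep z, hf2]
      rw [map_add, map_mul, map_mul, hΦ0, zero_mul, add_zero, map_sub]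
      congr 1
      simp [hAev]
    refine ⟨⟨Aev (g - h * Polynomial.C t), ⟨_, rfl⟩⟩, ?_⟩
    apply Subtype.ext
    push_cast
    rw [hval]
  -- the ideal I = (ωO - 1) and the Krull intersection theorem
  set I : Ideal O := Ideal.span {ωO - 1} with hI
  have hψω1 : ψ (ωO - 1) = 0 := by rw [map_sub, map_one, hψω, sub_self]
  have hItop : I ≠ ⊤ := by
    intro htop
    have h1 : (ωO - 1) ∣ 1 := Ideal.mem_span_singleton.mp
      (htop ▸ Submodule.mem_top : (1 : O) ∈ I)
    obtain ⟨u, hu⟩ := h1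
    have h2 := congrArg ψ hu
    rw [map_one, map_mul, hψω1, zero_mul] at h2
    exact one_ne_zero h2
  have hbot : ⨅ i : ℕ, I ^ i = ⊥ := Ideal.iInf_pow_eq_bot_of_isDomain I hItop
  have hω1O : ωO - 1 ≠ 0 := by
    intro h0
    apply sub_ne_zero_of_ne hω1
    have h1 := congrArg (Subtype.val) h0
    push_cast at h1
    exact h1
  -- now the main argument: assume the determinant vanishes
  intro hdet
  set MO : Matrix (Fin k) (Fin k) O := Matrix.of fun i j => xO i ^ m j with hMO
  have hdetO : MO.det = 0 := by
    apply Subtype.ext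
    have h1 := RingHom.map_det (Subring.subtype O) MO
    have h2 : (Subring.subtype O).mapMatrix MO
        = Matrix.of (fun i j : Fin k => (ω ^ (a i) + ω⁻¹ ^ (a i)) ^ (m j)) := by
      ext i j
      simp [hMO, hxO]
    have h3 : ((MO.det : O) : ℂ) = Matrix.det
        (Matrix.of (fun i j : Fin k => (ω ^ (a i) + ω⁻¹ ^ (a i)) ^ (m j))) := by
      rw [← h2, ← h1]; rfl
    rw [ZeroMemClass.coe_zero, h3]
    exact hdet
  obtain ⟨v, hv0, hv⟩ := Matrix.exists_mulVec_eq_zero_iff.mpr hdetO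
  obtain ⟨l1, hl1⟩ : ∃ l, v l ≠ 0 := by
    by_contra hcon; push_neg at hcon; exact hv0 (funext hcon)
  obtain ⟨B, hB⟩ : ∃ B : ℕ, v l1 ∉ I ^ B := by
    by_contra hcon; push_neg at hcon
    exact hl1 ((Submodule.mem_bot O).mp (hbot ▸ Ideal.mem_iInf.mpr hcon))
  set Pg : ℕ → Prop := fun N => ∀ l, v l ∈ I ^ N with hPg
  have hP0 : Pg 0 := by intro l; rw [pow_zero, Ideal.one_eq_top]; exact Submodule.mem_top
  have hPB : ¬ Pg B := fun hgood => hB (hgood l1)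
  set N := Nat.findGreatest Pg B with hNdef
  have hN : Pg N := Nat.findGreatest_spec (Nat.zero_le B) hP0
  have hNB : N < B := by
    rcases lt_or_eq_of_le (Nat.findGreatest_le (P := Pg) B) with h | h
    · exact h
    · exact absurd (h ▸ hN) hPB
  have hN1 : ¬ Pg (N + 1) := Nat.findGreatest_is_greatest (Nat.lt_succ_self N) hNB
  obtain ⟨l0, hl0⟩ : ∃ l, v l ∉ I ^ (N + 1) := by
    by_contra hcon
    push_neg at hcon
    exact hN1 hcon
  have hdex : ∀ l, ∃ dd : O, (ωO - 1) ^ N * dd = v l := by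
    intro l
    have h1 := hN l
    rw [hI, Ideal.span_singleton_pow, Ideal.mem_span_singleton] at h1
    obtain ⟨dd, hdd⟩ := h1
    exact ⟨dd, hdd.symm⟩
  choose d hd using hdex
  have hψd0 : ψ (d l0) ≠ 0 := by
    intro h0
    obtain ⟨e, he⟩ := hkerψ _ h0
    apply hl0
    rw [hI, Ideal.span_singleton_pow, Ideal.mem_span_singleton]
    exact ⟨e, by rw [← hd l0, he]; ring⟩
  have hmd : MO.mulVec d = 0 := by
    funext i
    have h1 : (ωO - 1) ^ N * (MO.mulVec d) i = 0 := by
      have h2 : (ωO - 1) ^ N * (MO.mulVec d) i = ∑ l, MO i l * ((ωO - 1) ^ N * d l) := by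
        simp only [Matrix.mulVec, dotProduct, Finset.mul_sum]
        exact Finset.sum_congr rfl fun l _ => by ring
      rw [h2, Finset.sum_congr rfl fun l _ => by rw [hd l]]
      simpa [Matrix.mulVec, dotProduct] using congrFun hv i
    show (MO.mulVec d) i = (0 : Fin k → ↥O) i
    rcases mul_eq_zero.mp h1 with h3 | h3
    · exact absurd h3 (pow_ne_zero N hω1O)
    · exact h3
  -- the polynomial with the kernel vector as coefficients
  set P : Polynomial O := ∑ l : Fin k, Polynomial.C (d l) * Polynomial.X ^ (m l) with hP
  have hPeval : ∀ i, P.eval (xO i) = 0 := by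
    intro i
    have h1 := congrFun hmd i
    simp only [hMO, Matrix.mulVec, dotProduct, Matrix.of_apply, Pi.zero_apply] at h1
    rw [hP]
    rw [Polynomial.eval_finset_sum]
    simp only [Polynomial.eval_mul, Polynomial.eval_C, Polynomial.eval_pow, Polynomial.eval_X]
    rw [← h1]
    exact Finset.sum_congr rfl fun l _ => mul_comm _ _
  set s : Finset O := Finset.univ.image xO with hs
  have hcard : s.card = k := by
    rw [hs, Finset.card_image_of_injective _ hxOinj, Finset.card_univ, Fintype.card_fin]
  have hdvd : (∏ z ∈ s, (Polynomial.X - Polynomial.C z)) ∣ P := by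
    apply aux_prod_X_sub_C_dvd
    intro z hz
    obtain ⟨i, -, rfl⟩ := Finset.mem_image.mp hz
    exact hPeval i
  obtain ⟨Q, hQ⟩ := hdvd
  -- map everything to (ZMod p)[X]
  have hmapG : Polynomial.map ψ (∏ z ∈ s, (Polynomial.X - Polynomial.C z))
      = (Polynomial.X - Polynomial.C (2 : ZMod p)) ^ k := by
    rw [← Polynomial.coe_mapRingHom, map_prod]
    have h1 : ∀ z ∈ s, (Polynomial.mapRingHom ψ) (Polynomial.X - Polynomial.C z)
        = Polynomial.X - Polynomial.C (2 : ZMod p) := by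
      intro z hz
      obtain ⟨i, -, rfl⟩ := Finset.mem_image.mp hz
      rw [Polynomial.coe_mapRingHom, Polynomial.map_sub, Polynomial.map_X, Polynomial.map_C,
        hψx i]
    rw [Finset.prod_congr rfl h1, Finset.prod_const, hcard]
  have hmapP : Polynomial.map ψ P
      = ∑ l : Fin k, Polynomial.C (ψ (d l)) * Polynomial.X ^ (m l) := by
    rw [hP, ← Polynomial.coe_mapRingHom, map_sum]
    refine Finset.sum_congr rfl fun l _ => ?_
    rw [Polynomial.coe_mapRingHom, Polynomial.map_mul, Polynomial.map_C, Polynomial.map_pow,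
      Polynomial.map_X]
  have hmapped : Polynomial.map ψ P
      = (Polynomial.X - Polynomial.C (2 : ZMod p)) ^ k * Polynomial.map ψ Q := by
    rw [hQ, Polynomial.map_mul, hmapG]
  -- extract the coefficient equations via the Taylor expansion at 2
  set db : Fin k → ZMod p := fun l => ψ (d l) with hdb
  have hcoeff : ∀ s' : ℕ, s' < k →
      ∑ l : Fin k, db l * ((2 : ZMod p) ^ (m l - s') * ((m l).choose s' : ZMod p)) = 0 := by
    intro s' hs'
    have htay := congrArg (fun f => Polynomial.coeff ((Polynomial.taylor (2 : ZMod p)) f) s')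
      hmapped
    have hL : (Polynomial.taylor (2 : ZMod p) (Polynomial.map ψ P)).coeff s'
        = ∑ l : Fin k, db l * ((2 : ZMod p) ^ (m l - s') * ((m l).choose s' : ZMod p)) := by
      rw [hmapP, map_sum, Polynomial.finset_sum_coeff]
      refine Finset.sum_congr rfl fun l _ => ?_
      rw [← Polynomial.smul_eq_C_mul, LinearMap.map_smul, Polynomial.coeff_smul]
      rw [Polynomial.taylor_apply, Polynomial.pow_comp, Polynomial.X_comp]
      rw [Polynomial.coeff_X_add_C_pow]
      simp [hdb, smul_eq_mul, mul_assoc]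
    have hR : (Polynomial.taylor (2 : ZMod p)
        ((Polynomial.X - Polynomial.C (2 : ZMod p)) ^ k * Polynomial.map ψ Q)).coeff s'
        = 0 := by
      rw [Polynomial.taylor_mul]
      have h1 : Polynomial.taylor (2 : ZMod p)
          ((Polynomial.X - Polynomial.C (2 : ZMod p)) ^ k) = Polynomial.X ^ k := by
        rw [Polynomial.taylor_apply, Polynomial.pow_comp, Polynomial.sub_comp,
          Polynomial.X_comp, Polynomial.C_comp]
        simp
      rw [h1]
      exact Polynomial.X_pow_dvd_iff.mp (dvd_mul_right _ _) s' hs'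
    rw [← hL, htay, hR]
  -- the linear algebra over ZMod p
  set A : Matrix (Fin k) (Fin k) (ZMod p) :=
    Matrix.of fun s' l : Fin k =>
      (2 : ZMod p) ^ (m l - (s' : ℕ)) * ((m l).choose (s' : ℕ) : ZMod p) with hA
  have hAv : A.mulVec db = 0 := by
    funext s'
    have h1 := hcoeff (s' : ℕ) s'.isLt
    simp only [Matrix.mulVec, dotProduct, hA, Matrix.of_apply, Pi.zero_apply]
    rw [← h1]
    exact Finset.sum_congr rfl fun l _ => mul_comm _ _
  -- the scaling identity
  have hid : ∀ (s' l : Fin k),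
      (((s' : ℕ).factorial : ZMod p) * (2 : ZMod p) ^ (s' : ℕ)) * A s' l
      = (descPochhammer (ZMod p) (s' : ℕ)).eval (((m l : ℕ) : ZMod p))
          * (2 : ZMod p) ^ (m l) := by
    intro s' l
    rw [descPochhammer_eval_eq_descFactorial]
    have hnat : ((s' : ℕ).factorial * 2 ^ (s' : ℕ))
          * (2 ^ (m l - (s' : ℕ)) * (m l).choose (s' : ℕ))
        = (m l).descFactorial (s' : ℕ) * 2 ^ (m l) := by
      rcases le_or_gt (s' : ℕ) (m l) with hle | hlt
      · rw [Nat.descFactorial_eq_factorial_mul_choose]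
        have h2 : 2 ^ (s' : ℕ) * 2 ^ (m l - (s' : ℕ)) = 2 ^ (m l) := by
          rw [← pow_add]; congr 1; omega
        calc ((s' : ℕ).factorial * 2 ^ (s' : ℕ))
              * (2 ^ (m l - (s' : ℕ)) * (m l).choose (s' : ℕ))
            = ((s' : ℕ).factorial * (m l).choose (s' : ℕ))
              * (2 ^ (s' : ℕ) * 2 ^ (m l - (s' : ℕ))) := by ring
          _ = (s' : ℕ).factorial * (m l).choose (s' : ℕ) * 2 ^ (m l) := by rw [h2]
      · rw [Nat.choose_eq_zero_of_lt hlt, Nat.descFactorial_eq_zero_iff_lt.mpr hlt]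
        ring
    have hcast := congrArg (fun t : ℕ => (t : ZMod p)) hnat
    push_cast at hcast
    simp only [hA, Matrix.of_apply]
    linear_combination hcast
  -- the Vandermonde matrix in the exponents
  set vv : Fin k → ZMod p := fun l => ((m l : ℕ) : ZMod p) with hvv
  have hvvinj : Function.Injective vv := by
    intro i j h
    have hi : (m i) < p := by have := (hmn i).2; omega
    have hj : (m j) < p := by have := (hmn j).2; omega
    have hvals := congrArg ZMod.val h
    simp only [hvv, ZMod.val_cast_of_lt hi, ZMod.val_cast_of_lt hj] at hvals
    exact hminj hvals
  set V : Matrix (Fin k) (Fin k) (ZMod p) :=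
    Matrix.of fun s' l : Fin k => (descPochhammer (ZMod p) (s' : ℕ)).eval (vv l) with hV
  have hVdet : V.det ≠ 0 := by
    have h1 : V = (Matrix.of fun i j : Fin k =>
        ((fun j : Fin k => descPochhammer (ZMod p) (j : ℕ)) j).eval (vv i)).transpose := by
      ext i j; rfl
    rw [h1, Matrix.det_transpose,
      ← Matrix.det_eval_matrixOfPolynomials_eq_det_vandermonde vv
        (fun j : Fin k => descPochhammer (ZMod p) (j : ℕ))
        (fun j => descPochhammer_natDegree (ZMod p) (j : ℕ))
        (fun j => monic_descPochhammer (ZMod p) (j : ℕ)),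
      Matrix.det_vandermonde]
    rw [Finset.prod_ne_zero_iff]
    intro i _
    rw [Finset.prod_ne_zero_iff]
    intro j hj
    rw [Finset.mem_Ioi] at hj
    exact sub_ne_zero_of_ne fun hh => absurd (hvvinj hh) (Fin.ne_of_gt hj)
  -- conclude db = 0, contradiction
  have hw : V.mulVec (fun l => (2 : ZMod p) ^ (m l) * db l) = 0 := by
    funext s'
    have h0 := congrFun hAv s'
    simp only [Matrix.mulVec, dotProduct, Pi.zero_apply] at h0 ⊢
    calc ∑ l, V s' l * ((2 : ZMod p) ^ (m l) * db l)
        = ∑ l, (((s' : ℕ).factorial : ZMod p) * (2 : ZMod p) ^ (s' : ℕ)) * (A s' l * db l) := by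
          refine Finset.sum_congr rfl fun l _ => ?_
          have hidl := hid s' l
          simp only [hV, Matrix.of_apply, hvv]
          linear_combination db l * hidl.symm
      _ = (((s' : ℕ).factorial : ZMod p) * (2 : ZMod p) ^ (s' : ℕ)) * ∑ l, A s' l * db l := by
          rw [Finset.mul_sum]
      _ = 0 := by rw [h0, mul_zero]
  have hwz : (fun l => (2 : ZMod p) ^ (m l) * db l) = 0 := by
    by_contra hcon
    exact hVdet (Matrix.exists_mulVec_eq_zero_iff.mp ⟨_, hcon, hw⟩)
  have h2ne : (2 : ZMod p) ≠ 0 := by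
    have h1 : ((2 : ℕ) : ZMod p) ≠ 0 := by
      rw [Ne, ZMod.natCast_eq_zero_iff]
      intro hdvd
      have := Nat.le_of_dvd (by norm_num) hdvd
      omega
    exact_mod_cast h1
  have hdb0 : db l0 = 0 := by
    have h1 := congrFun hwz l0
    simp only [Pi.zero_apply] at h1
    rcases mul_eq_zero.mp h1 with h3 | h3
    · exact absurd h3 (pow_ne_zero _ h2ne)
    · exact h3
  exact hψd0 hdb0
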